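/- Let P_1, …, P_{N_S} ≥ 0 and P_{RD} ≥ 0 satisfy Σ_i P_i ≤ P_{RD}, and let q ∈ [0, P_{RD}]. Then (1/N_S) Σ_{i=1}^{N_S} ln((1 + P_i)/(1 + (q/P_{RD}) P_i)) ≤ ln((1 + P_{RD}/N_S)/(1 + q/N_S)). -/

import Mathlib

open Real Set

private lemma concave_aux (l : ℝ) (hl0 : 0 ≤ l) (hl1 : l ≤ 1) :
    ConcaveOn ℝ (Ici (0:ℝ)) (fun x => Real.log (1 + x) - Real.log (1 + l * x)) := by
  have hpos : ∀ x : ℝ, 0 ≤ x → (0:ℝ) < 1 + x := fun x hx => by linarith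
  have hposl : ∀ x : ℝ, 0 ≤ x → (0:ℝ) < 1 + l * x := fun x hx => by nlinarith
  apply concaveOn_of_hasDerivWithinAt2_nonpos (f' := fun x => 1 / (1 + x) - l / (1 + l * x))
      (f'' := fun x => -(1 / (1 + x) ^ 2) + l ^ 2 / (1 + l * x) ^ 2) (convex_Ici 0)
  · apply ContinuousOn.sub
    · exact (Real.continuousOn_log.comp (by fun_prop)
        (fun x hx => ne_of_gt (hpos x hx)))
    · exact (Real.continuousOn_log.comp (by fun_prop)
        (fun x hx => ne_of_gt (hposl x hx)))
  · intro x hx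
    rw [interior_Ici] at hx
    have hx0 : (0:ℝ) ≤ x := le_of_lt hx
    have h1 : HasDerivAt (fun x : ℝ => Real.log (1 + x)) (1 / (1 + x)) x := by
      have : HasDerivAt (fun x : ℝ => 1 + x) 1 x := (hasDerivAt_id x).const_add 1
      simpa using this.log (ne_of_gt (hpos x hx0))
    have h2 : HasDerivAt (fun x : ℝ => Real.log (1 + l * x)) (l / (1 + l * x)) x := by
      have : HasDerivAt (fun x : ℝ => 1 + l * x) l x := by
        simpa using ((hasDerivAt_id x).const_mul l).const_add 1
      simpa using this.log (ne_of_gt (hposl x hx0))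
    exact (h1.sub h2).hasDerivWithinAt
  · intro x hx
    rw [interior_Ici] at hx
    have hx0 : (0:ℝ) ≤ x := le_of_lt hx
    have ha : (1 + x) ≠ 0 := ne_of_gt (hpos x hx0)
    have hb : (1 + l * x) ≠ 0 := ne_of_gt (hposl x hx0)
    have h1 : HasDerivAt (fun x : ℝ => 1 / (1 + x)) (-(1 / (1 + x) ^ 2)) x := by
      have : HasDerivAt (fun x : ℝ => 1 + x) 1 x := (hasDerivAt_id x).const_add 1
      have := this.inv ha
      simpa [one_div] using this.const_mul (1:ℝ) |>.congr_deriv (by ring)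
    have h2 : HasDerivAt (fun x : ℝ => l / (1 + l * x)) (-(l ^ 2 / (1 + l * x) ^ 2)) x := by
      have hd : HasDerivAt (fun x : ℝ => 1 + l * x) l x := by
        simpa using ((hasDerivAt_id x).const_mul l).const_add 1
      have := (hd.inv hb).const_mul l
      refine HasDerivAt.congr_deriv (by simpa [div_eq_mul_inv, mul_comm] using this) ?_
      field_simp
    have := h1.sub h2
    refine HasDerivAt.hasDerivWithinAt (this.congr_deriv ?_)
    ring
  · intro x hx
    rw [interior_Ici] at hx
    have hx0 : (0:ℝ) ≤ x := le_of_lt hx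
    have ha : (0:ℝ) < 1 + x := by linarith
    have hb : (0:ℝ) < 1 + l * x := by nlinarith
    rw [neg_add_nonpos_iff, div_le_div_iff₀ (by positivity) (by positivity)]
    nlinarith [sq_nonneg x, sq_nonneg (1 - l), mul_nonneg hl0 hx0]

theorem jensen_rate_loss_bound (Ns : ℕ) (hNs : 0 < Ns)
    (P : Fin Ns → ℝ) (hP : ∀ i, 0 ≤ P i)
    (PRD : ℝ) (hPRD : 0 < PRD)
    (hsum : ∑ i, P i ≤ PRD)
    (q : ℝ) (hq0 : 0 ≤ q) (hq1 : q ≤ PRD) :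
    (1 / (Ns : ℝ)) * ∑ i, Real.log ((1 + P i) / (1 + (q / PRD) * P i)) ≤
      Real.log ((1 + PRD / Ns) / (1 + q / Ns)) := by
  set l : ℝ := q / PRD with hl
  have hl0 : 0 ≤ l := div_nonneg hq0 hPRD.le
  have hl1 : l ≤ 1 := (div_le_one hPRD).mpr hq1
  have hNs' : (0:ℝ) < Ns := by exact_mod_cast hNs
  set f : ℝ → ℝ := fun x => Real.log (1 + x) - Real.log (1 + l * x) with hf
  have hconc := concave_aux l hl0 hl1
  have hjensen := hconc.le_map_sum (t := Finset.univ) (w := fun _ : Fin Ns => 1 / (Ns:ℝ))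
    (p := P) (fun i _ => by positivity)
    (by simp [Finset.sum_const, Finset.card_univ]; field_simp)
    (fun i _ => hP i)
  set S : ℝ := ∑ i, P i with hS
  have hSn : ∑ i, (1 / (Ns:ℝ)) • P i = S / Ns := by
    rw [← Finset.smul_sum]; simp [smul_eq_mul, div_eq_mul_inv, mul_comm]; left; rfl
  have hS0 : 0 ≤ S := Finset.sum_nonneg fun i _ => hP i
  -- monotonicity step: f (S/Ns) ≤ f (PRD/Ns)
  have hmono : f (S / Ns) ≤ f (PRD / Ns) := by
    set a : ℝ := S / Ns
    set b : ℝ := PRD / Ns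
    have ha0 : 0 ≤ a := by positivity
    have hb0 : 0 ≤ b := by positivity
    have hab : a ≤ b := by simp only [a, b]; gcongr
    have h1 : (0:ℝ) < 1 + a := by linarith
    have h2 : (0:ℝ) < 1 + l * a := by nlinarith
    have h3 : (0:ℝ) < 1 + b := by linarith
    have h4 : (0:ℝ) < 1 + l * b := by nlinarith
    have key : (1 + a) * (1 + l * b) ≤ (1 + b) * (1 + l * a) := by nlinarith
    have := Real.log_le_log (by positivity) key
    rw [Real.log_mul (ne_of_gt h1) (ne_of_gt h4), Real.log_mul (ne_of_gt h3) (ne_of_gt h2)]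
      at this
    simp only [hf]; linarith
  -- rewrite each summand
  have hterm : ∀ i, Real.log ((1 + P i) / (1 + l * P i)) = f (P i) := by
    intro i
    have h1 : (0:ℝ) < 1 + P i := by linarith [hP i]
    have h2 : (0:ℝ) < 1 + l * P i := by nlinarith [hP i, mul_nonneg hl0 (hP i)]
    simp [hf, Real.log_div (ne_of_gt h1) (ne_of_gt h2)]
  have hrhs : Real.log ((1 + PRD / Ns) / (1 + q / Ns)) = f (PRD / Ns) := by
    have hq' : l * (PRD / Ns) = q / Ns := by
      field_simp [hl]
      rw [hl]; field_simp
    have h1 : (0:ℝ) < 1 + PRD / Ns := by positivity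
    have h2 : (0:ℝ) < 1 + q / Ns := by positivity
    simp only [hf]
    rw [Real.log_div (ne_of_gt h1) (ne_of_gt h2), ← hq']
  calc (1 / (Ns : ℝ)) * ∑ i, Real.log ((1 + P i) / (1 + l * P i))
      = ∑ i, (1 / (Ns:ℝ)) • f (P i) := by
        rw [Finset.mul_sum]; exact Finset.sum_congr rfl fun i _ => by rw [hterm i]; rfl
    _ ≤ f (∑ i, (1 / (Ns:ℝ)) • P i) := hjensen
    _ = f (S / Ns) := by rw [hSn]
    _ ≤ f (PRD / Ns) := hmono
    _ = Real.log ((1 + PRD / Ns) / (1 + q / Ns)) := hrhs.symm
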